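/- Let 0<q<1 and let p be the transition function on ℕ defined in the context. Then p has no stationary probability distribution: there is no function μ : ℕ → ℝ with μ(k) ≥ 0 for all k, Σ_k μ(k) = 1, and Σ_i μ(i) p(i,j) = μ(j) for every j. -/

import Mathlib

/-- Let `0 < q < 1` and let `p` be the transition function on `ℕ` of the
context. Then `p` has no stationary probability distribution: there is no `μ : ℕ → ℝ`
with `μ(k) ≥ 0` for all `k`, `Σ_k μ(k) = 1`, and `Σ_i μ(i) p(i,j) = μ(j)` for every `j`. -/
theorem stmt13 (q : ℝ) (hq0 : 0 < q) (hq1 : q < 1) (p : ℕ → ℕ → ℝ)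
    (hp1 : ∀ k : ℕ, p k (k + 1) = q⁻¹ * (1 - q ^ (2 * k + 2)) / (q + q⁻¹))
    (hp2 : ∀ k : ℕ, p k k = 2 * q ^ (2 * k + 1) / (q + q⁻¹))
    (hp3 : ∀ k : ℕ, 1 ≤ k → p k (k - 1) = q * (1 - q ^ (2 * k)) / (q + q⁻¹))
    (hp0 : ∀ k j : ℕ, j ≠ k + 1 → j ≠ k → ¬(1 ≤ k ∧ j = k - 1) → p k j = 0) :
    ¬ ∃ μ : ℕ → ℝ, (∀ k : ℕ, 0 ≤ μ k) ∧ HasSum μ 1 ∧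
      ∀ j : ℕ, ∑' i : ℕ, μ i * p i j = μ j := by
  rintro ⟨μ, hpos, hsum, hst⟩
  have hq : q ≠ 0 := ne_of_gt hq0
  have hc : 0 < q + q⁻¹ := by positivity
  have hcne : q + q⁻¹ ≠ 0 := ne_of_gt hc
  -- detailed balance
  have hbal : ∀ j : ℕ, μ j * p j (j+1) = μ (j+1) * p (j+1) j := by
    intro j
    induction j with
    | zero =>
      have h0 := hst 0
      have ht : ∑' i, μ i * p i 0 = μ 0 * p 0 0 + μ 1 * p 1 0 := by
        rw [tsum_eq_sum (s := {0, 1}) (by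
          intro i hi
          simp only [Finset.mem_insert, Finset.mem_singleton] at hi
          push_neg at hi
          rw [hp0 i 0 (by omega) (by omega) (by omega), mul_zero])]
        rw [Finset.sum_insert (by simp), Finset.sum_singleton]
      have e1 : p 0 1 = 1 - p 0 0 := by
        have a1 := hp1 0
        have a2 := hp2 0
        norm_num at a1 a2
        rw [a1, a2]
        field_simp
        ring
      rw [ht] at h0
      show μ 0 * p 0 1 = μ 1 * p 1 0
      rw [e1]
      linarith [h0]
      -- μ0*(1 - p00) = μ0 - μ0 p00 = μ1 p10
    | succ j ih =>
      have h0 := hst (j+1)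
      have ht : ∑' i, μ i * p i (j+1) =
          μ j * p j (j+1) + μ (j+1) * p (j+1) (j+1) + μ (j+2) * p (j+2) (j+1) := by
        rw [tsum_eq_sum (s := {j, j+1, j+2}) (by
          intro i hi
          simp only [Finset.mem_insert, Finset.mem_singleton] at hi
          push_neg at hi
          rw [hp0 i (j+1) (by omega) (by omega) (by omega), mul_zero])]
        rw [Finset.sum_insert (by simp), Finset.sum_insert (by simp), Finset.sum_singleton]
        ring
      rw [ht] at h0
      -- row sum at j+1
      have hrow : p (j+1) j + p (j+1) (j+1) + p (j+1) (j+2) = 1 := by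
        have a1 := hp1 (j+1)
        have a2 := hp2 (j+1)
        have a3 := hp3 (j+1) (by omega)
        simp only [Nat.add_sub_cancel] at a3
        rw [show j+1+1 = j+2 from rfl] at a1
        rw [a1, a2, a3]
        field_simp
        ring
      show μ (j+1) * p (j+1) (j+2) = μ (j+2) * p (j+2) (j+1)
      linear_combination μ (j+1) * hrow - h0 + ih
  -- μ k = μ (k+1) * q^2
  have hQ : ∀ k : ℕ, μ k = μ (k+1) * q^2 := by
    intro k
    have h := hbal k
    have a1 := hp1 k
    have a3 := hp3 (k+1) (by omega)
    simp only [Nat.add_sub_cancel] at a3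
    rw [a1, a3] at h
    have hx : (0:ℝ) < 1 - q ^ (2*k+2) := by
      have : q ^ (2*k+2) < 1 := pow_lt_one₀ hq0.le hq1 (by omega)
      linarith
    have hxe : (1 - q ^ (2*k+2)) ≠ 0 := ne_of_gt hx
    have hxx : q ^ (2*(k+1)) = q ^ (2*k+2) := by ring_nf
    rw [hxx] at h
    field_simp at h
    have h' : μ k * (1 - q ^ (2*k+2)) = (μ (k+1) * q^2) * (1 - q ^ (2*k+2)) := by
      linear_combination (1 - q ^ (2*k+2)) * h
    exact mul_right_cancel₀ hxe h'
  have hmono : ∀ k : ℕ, μ 0 ≤ μ k := by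
    intro k
    induction k with
    | zero => exact le_refl _
    | succ k ih =>
      have h := hQ k
      have hsq : q^2 ≤ 1 := by nlinarith
      nlinarith [hpos (k+1), mul_nonneg (hpos (k+1)) (sub_nonneg.mpr hsq)]
  have h0le : μ 0 ≤ 0 :=
    ge_of_tendsto' hsum.summable.tendsto_atTop_zero hmono
  have h00 : μ 0 = 0 := le_antisymm h0le (hpos 0)
  have hall : ∀ k, μ k = 0 := by
    intro k
    induction k with
    | zero => exact h00
    | succ k ih =>
      have h := hQ k
      rw [ih] at h
      have : q^2 ≠ 0 := by positivity
      have := (mul_eq_zero.mp h.symm)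
      rcases this with h1 | h2
      · exact h1
      · exact absurd h2 ‹q^2 ≠ 0›
  have : HasSum μ 0 := by
    rw [show μ = fun _ => (0:ℝ) from funext hall]
    exact hasSum_zero
  have := hsum.unique this
  norm_num at this
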